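/- For n ≥ 3, the number R(n) of square occurrences (repetitions counted) in the Fibonacci word f_n satisfies 5·R(n) = 4nF(n) − 2(n+6)F(n−1) − 20F(n−2) + 5(n+1); equivalently, R(n) = (4/5)nF(n) − (2/5)(n+6)F(n−1) − 4F(n−2) + n + 1. -/

import Mathlib

/-- Fibonacci numbers: F(0)=1, F(1)=1, F(n+2)=F(n+1)+F(n). -/
def F : ℕ → ℕ
  | 0 => 1
  | 1 => 1
  | n + 2 => F (n + 1) + F n

/-- Finite Fibonacci words over {a,b} coded as Fin 2 (a=0, b=1). -/
def fibWord : ℕ → List (Fin 2)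
  | 0 => [0]
  | 1 => [1]
  | n + 2 => fibWord (n + 1) ++ fibWord n

/-- R(n): number of square occurrences (repetitions counted) in f_n: pairs (i,l) with
l ≥ 1, i+2l ≤ |f_n|, and the length-l factor at position i equal to the one at i+l. -/
noncomputable def R (n : ℕ) : ℕ :=
  {p : ℕ × ℕ | 1 ≤ p.2 ∧ p.1 + 2 * p.2 ≤ (fibWord n).length ∧
    ∀ t < p.2, (fibWord n).getD (p.1 + t) 0 = (fibWord n).getD (p.1 + p.2 + t) 0}.ncard

namespace Fib17

lemma F0 : F 0 = 1 := rfl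
lemma F1 : F 1 = 1 := rfl
lemma F_add_two (n : ℕ) : F (n+2) = F (n+1) + F n := rfl

lemma F_pos (n : ℕ) : 0 < F n := by
  induction n using Nat.twoStepInduction with
  | zero => decide
  | one => decide
  | more n ih1 ih2 => rw [F_add_two]; omega

lemma F_le_succ (n : ℕ) : F n ≤ F (n+1) := by
  cases n with
  | zero => decide
  | succ m => rw [F_add_two]; have := F_pos m; omega

lemma F_mono : Monotone F := monotone_nat_of_le_succ F_le_succ

lemma F_strictMonoOn : ∀ a b, 1 ≤ a → a < b → F a < F b := by
  intro a b ha hab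
  have h1 : F (a+1) ≥ F a + 1 := by
    cases a with
    | zero => omega
    | succ m => rw [F_add_two]; have := F_pos m; omega
  have := F_mono (show a + 1 ≤ b from hab)
  omega

lemma fibWord_add_two (n : ℕ) : fibWord (n+2) = fibWord (n+1) ++ fibWord n := rfl

lemma length_fibWord (n : ℕ) : (fibWord n).length = F n := by
  induction n using Nat.twoStepInduction with
  | zero => decide
  | one => decide
  | more n ih1 ih2 => rw [fibWord_add_two, List.length_append, ih1, ih2, F_add_two]

lemma fibWord_prefix (n : ℕ) (hn : 1 ≤ n) : fibWord n <+: fibWord (n+1) := by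
  match n, hn with
  | 1, _ => exact ⟨[0], rfl⟩
  | (m+2), _ => exact ⟨fibWord (m+1), rfl⟩

lemma fibWord_prefix_le {a b : ℕ} (ha : 1 ≤ a) (hab : a ≤ b) :
    fibWord a <+: fibWord b := by
  induction b with
  | zero => omega
  | succ m ih =>
    rcases Nat.lt_or_ge a (m+1) with h | h
    · exact (ih (by omega)).trans (fibWord_prefix m (by omega))
    · have : a = m + 1 := by omega
      subst this; exact List.prefix_refl _

/-- the infinite Fibonacci word -/
def s (j : ℕ) : Fin 2 := (fibWord (j+2)).getD j 0

lemma j_lt_F (j : ℕ) : j < F (j + 1) := by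
  induction j with
  | zero => decide
  | succ m ih => rw [F_add_two]; have := F_pos m; omega

lemma getD_fibWord {n j : ℕ} (hn : 1 ≤ n) (hj : j < F n) :
    (fibWord n).getD j 0 = s j := by
  unfold s
  rcases Nat.le_total n (j+2) with h | h
  · obtain ⟨t, ht⟩ := fibWord_prefix_le hn h
    rw [← ht, List.getD_append _ _ _ _ (by rw [length_fibWord]; exact hj)]
  · obtain ⟨t, ht⟩ := fibWord_prefix_le (by omega) h
    rw [← ht, List.getD_append _ _ _ _ (by rw [length_fibWord]; have := j_lt_F j; have := F_mono (show j+1 ≤ j+2 by omega); omega)]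

lemma s_eq_getElem {n j : ℕ} (hn : 1 ≤ n) (hj : j < F n) :
    s j = (fibWord n).getD j 0 := (getD_fibWord hn hj).symm

lemma s0 : s 0 = 1 := rfl
lemma s1 : s 1 = 0 := rfl
lemma s2 : s 2 = 1 := rfl

/-- segment shift: s (F (m+1) + c) = s c for c < F m -/
lemma s_shift {m c : ℕ} (hm : 1 ≤ m) (hc : c < F m) :
    s (F (m+1) + c) = s c := by
  have h1 : (fibWord (m+2)).getD (F (m+1) + c) 0 = (fibWord m).getD c 0 := by
    rw [fibWord_add_two, List.getD_append_right _ _ _ _ (by rw [length_fibWord]; omega)]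
    rw [length_fibWord]; congr 1; omega
  rw [← getD_fibWord (show 1 ≤ m+2 by omega) (by rw [F_add_two]; omega), h1,
    getD_fibWord hm hc]



/-- blocks of the level-k factorization -/
def blk (k : ℕ) (c : Fin 2) : List (Fin 2) := if c = 1 then fibWord (k+1) else fibWord k

lemma flatMap_fibWord (m k : ℕ) : (fibWord m).flatMap (blk k) = fibWord (m + k) := by
  induction m using Nat.twoStepInduction with
  | zero => simp [fibWord, blk]
  | one =>
    rw [Nat.add_comm]
    show [(1 : Fin 2)].flatMap (blk k) = fibWord (k+1)
    simp [blk]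
  | more n ih1 ih2 =>
    rw [fibWord_add_two, List.flatMap_append, ih1, ih2]
    have e1 : n + 2 + k = (n + k) + 2 := by omega
    have e2 : n + 1 + k = (n + k) + 1 := by omega
    rw [e1, e2, fibWord_add_two]

lemma blk_one (k : ℕ) : blk k 1 = fibWord (k+1) := if_pos rfl

lemma blk_ne (k : ℕ) {c : Fin 2} (h : c ≠ 1) : blk k c = fibWord k := if_neg h

lemma blk_comp (a b : ℕ) (c : Fin 2) :
    (blk b c).flatMap (blk a) = blk (a + b) c := by
  by_cases h : c = 1
  · subst h; rw [blk_one, blk_one, flatMap_fibWord]; congr 1; omega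
  · rw [blk_ne _ h, blk_ne _ h, flatMap_fibWord]; congr 1; omega

/-- Θ k r : start position of the r-th level-k block -/
def Th (k : ℕ) : ℕ → ℕ
  | 0 => 0
  | r+1 => Th k r + (if s r = 1 then F (k+1) else F k)

lemma Th_zero (k : ℕ) : Th k 0 = 0 := rfl
lemma Th_succ (k r : ℕ) : Th k (r+1) = Th k r + (if s r = 1 then F (k+1) else F k) := rfl

lemma Th_step_le (k r : ℕ) : Th k (r+1) ≤ Th k r + F (k+1) := by
  rw [Th_succ]; split
  · omega
  · have := F_le_succ k; omega

lemma Th_step_ge (k r : ℕ) : Th k r + F k ≤ Th k (r+1) := by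
  rw [Th_succ]; split
  · have := F_le_succ k; omega
  · omega

lemma Th_strictMono (k : ℕ) : StrictMono (Th k) := by
  apply strictMono_nat_of_lt_succ
  intro r
  have := Th_step_ge k r
  have := F_pos k
  omega

lemma Th_mono (k : ℕ) : Monotone (Th k) := (Th_strictMono k).monotone

lemma ThLen (N k : ℕ) (hN : 1 ≤ N) :
    ∀ r, r ≤ F N → (((fibWord N).take r).flatMap (blk k)).length = Th k r := by
  intro r
  induction r with
  | zero => simp [Th_zero]
  | succ m ih =>
    intro hm
    have hmlt : m < (fibWord N).length := by rw [length_fibWord]; omega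
    rw [List.take_succ, List.flatMap_append, List.length_append, ih (by omega), Th_succ]
    congr 1
    rw [List.getElem?_eq_getElem hmlt]
    have hget : (fibWord N)[m] = s m := by
      have := getD_fibWord hN (show m < F N by omega)
      rwa [List.getD_eq_getElem _ _ hmlt] at this
    simp [hget, blk]
    split <;> simp [length_fibWord]

lemma take_flatMap_eq (N k r : ℕ) (hN : 1 ≤ N) (hr : r ≤ F N) :
    ((fibWord N).take r).flatMap (blk k) = (fibWord (N + k)).take (Th k r) := by
  have hpre : ((fibWord N).take r).flatMap (blk k) <+: fibWord (N + k) := by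
    rw [← flatMap_fibWord N k]
    conv_rhs => rw [← List.take_append_drop r (fibWord N)]
    rw [List.flatMap_append]
    exact ⟨_, rfl⟩
  rw [List.prefix_iff_eq_take.mp hpre, ThLen N k hN r hr]

lemma Th_F (k m : ℕ) (hm : 1 ≤ m) : Th k (F m) = F (m + k) := by
  have := ThLen m k hm (F m) le_rfl
  rw [List.take_of_length_le (by rw [length_fibWord]), flatMap_fibWord, length_fibWord] at this
  omega

lemma Th_comp (a b r : ℕ) : Th a (Th b r) = Th (a + b) r := by
  have hN : 1 ≤ r + 1 := by omega
  have hrle : r ≤ F (r+1) := le_of_lt (j_lt_F r)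
  have h1 : (((fibWord (r+1)).take r).flatMap (blk b)).flatMap (blk a)
      = ((fibWord (r+1)).take r).flatMap (blk (a + b)) := by
    rw [List.flatMap_assoc]
    simp only [blk_comp]

  have h2 := ThLen (r+1) (a+b) hN r hrle
  rw [← h1] at h2
  rw [take_flatMap_eq (r+1) b r hN hrle] at h2
  have hble : Th b r ≤ F (r + 1 + b) := by
    have := Th_mono b hrle
    rw [Th_F b (r+1) (by omega)] at this
    omega
  rw [ThLen (r+1+b) a (by omega) (Th b r) hble] at h2
  exact h2

lemma Th_r_le (k r : ℕ) : r ≤ Th k r := by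
  induction r with
  | zero => simp [Th_zero]
  | succ m ih => have := Th_step_ge k m; have := F_pos k; omega

/-- block content lemma -/
lemma s_block (k r c : ℕ) (hc : c < (blk k (s r)).length) :
    s (Th k r + c) = (blk k (s r)).getD c 0 := by
  have hrlt : r < F (r+2) := by
    have h1 := j_lt_F r
    have h2 : F (r+1) ≤ F (r+2) := F_le_succ (r+1)
    omega
  have hrlen : r < (fibWord (r+2)).length := by rw [length_fibWord]; exact hrlt
  have hget : (fibWord (r+2))[r]'hrlen = s r := by
    have := getD_fibWord (show 1 ≤ r+2 by omega) hrlt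
    rwa [List.getD_eq_getElem _ _ hrlen] at this
  have hdec : fibWord (r+2) = (fibWord (r+2)).take r
      ++ (fibWord (r+2))[r]'hrlen :: (fibWord (r+2)).drop (r+1) := by
    conv_lhs => rw [← List.take_append_drop r (fibWord (r+2))]
    congr 1
    exact List.drop_eq_getElem_cons hrlen
  have hblen : (blk k (s r)).length = if s r = 1 then F (k+1) else F k := by
    unfold blk; split <;> simp [length_fibWord]
  have hflat : fibWord (r+2+k) = ((fibWord (r+2)).take r).flatMap (blk k)
      ++ (blk k (s r) ++ ((fibWord (r+2)).drop (r+1)).flatMap (blk k)) := by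
    conv_lhs => rw [← flatMap_fibWord (r+2) k, hdec]
    rw [List.flatMap_append, List.flatMap_cons, hget]
  have hlen1 : (((fibWord (r+2)).take r).flatMap (blk k)).length = Th k r :=
    ThLen (r+2) k (by omega) r (by omega)
  have hr2 : r + 1 ≤ F (r+2) := by
    have h1 := j_lt_F r
    have h2 : F (r+1) ≤ F (r+2) := F_le_succ (r+1)
    omega
  have hstep : Th k r + c < Th k (r+1) := by
    rw [Th_succ, ← hblen]
    omega
  have hposlt : Th k r + c < F (r+2+k) := by
    have h3 : Th k (r+1) ≤ Th k (F (r+2)) := Th_mono k hr2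
    rw [Th_F k (r+2) (by omega)] at h3
    omega
  rw [s_eq_getElem (show 1 ≤ r+2+k by omega) hposlt, hflat,
    List.getD_append_right _ _ _ _ (by rw [hlen1]; omega), hlen1]
  have he : Th k r + c - Th k r = c := by omega
  rw [he, List.getD_append _ _ _ _ hc]

lemma blk_length (k : ℕ) (c : Fin 2) :
    (blk k c).length = if c = 1 then F (k+1) else F k := by
  unfold blk; split <;> simp [length_fibWord]

lemma Th_succ' (k r : ℕ) : Th k (r+1) = Th k r + (blk k (s r)).length := by
  rw [Th_succ, blk_length]

/-- covering: every position lies in some block -/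
lemma Th_cover (k j : ℕ) : ∃ r, Th k r ≤ j ∧ j < Th k (r+1) := by
  induction j with
  | zero => exact ⟨0, by simp [Th_zero], by have := Th_step_ge k 0; have := F_pos k; simp [Th_zero] at *; omega⟩
  | succ m ih =>
    obtain ⟨r, h1, h2⟩ := ih
    rcases Nat.lt_or_ge (m+1) (Th k (r+1)) with h | h
    · exact ⟨r, by omega, h⟩
    · refine ⟨r+1, h, ?_⟩
      have := Th_step_ge k (r+1)
      have := F_pos k
      omega

lemma Th_cover_unique {k a b j : ℕ} (ha : Th k a ≤ j) (ha2 : j < Th k (a+1))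
    (hb : Th k b ≤ j) (hb2 : j < Th k (b+1)) : a = b := by
  rcases Nat.lt_trichotomy a b with h | h | h
  · have := Th_mono k (show a + 1 ≤ b by omega); omega
  · exact h
  · have := Th_mono k (show b + 1 ≤ a by omega); omega

-- first letters of blocks
lemma fibWord_getD_zero (k : ℕ) (hk : 1 ≤ k) : (fibWord k).getD 0 0 = 1 := by
  rw [getD_fibWord hk (F_pos k)]
  rfl

lemma s_Th_start (k r : ℕ) (hk : 1 ≤ k) : s (Th k r) = 1 := by
  have h := s_block k r 0 (by rw [blk_length]; split <;> [exact F_pos (k+1); exact F_pos k])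
  rw [Nat.add_zero] at h
  rw [h]
  unfold blk
  split
  · exact fibWord_getD_zero (k+1) (by omega)
  · exact fibWord_getD_zero k hk

lemma fibWord_getD_one (k : ℕ) (hk : 2 ≤ k) : (fibWord k).getD 1 0 = 0 := by
  have h1 : (1:ℕ) < F k := by
    have := F_strictMonoOn 1 k (le_refl 1) (by omega)
    rw [F1] at this; omega
  rw [getD_fibWord (by omega) h1]
  rfl

lemma s_Th_start1 (k r : ℕ) (hk : 2 ≤ k) : s (Th k r + 1) = 0 := by
  have hlen : 1 < (blk k (s r)).length := by
    rw [blk_length]; split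
    · have := F_strictMonoOn 1 (k+1) (le_refl 1) (by omega); rw [F1] at this; omega
    · have := F_strictMonoOn 1 k (le_refl 1) (by omega); rw [F1] at this; omega
  have h := s_block k r 1 hlen
  rw [h]
  unfold blk
  split
  · exact fibWord_getD_one (k+1) (by omega)
  · exact fibWord_getD_one k hk



lemma Th_inj (K : ℕ) : Function.Injective (Th K) := (Th_strictMono K).injective

/-- pin-down: refute membership in the Q-set -/
lemma notQ {k a v : ℕ} (h1 : Th (k+1) a < v) (h2 : v ≤ Th (k+1) (a+1))
    (h3 : v ≠ Th (k+1) a + F (k+1)) :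
    ¬ ∃ r, v = Th (k+1) r + F (k+1) := by
  rintro ⟨r, rfl⟩
  have hl : 0 < F (k+1) := F_pos (k+1)
  have hr : Th (k+1) r + F (k+1) ≤ Th (k+1) (r+1) := Th_step_ge (k+1) r
  rcases Nat.lt_trichotomy r a with h | h | h
  · have := Th_mono (k+1) (show r + 1 ≤ a by omega)
    omega
  · subst h; exact h3 rfl
  · have := Th_mono (k+1) (show a + 1 ≤ r by omega)
    omega

lemma notQ2 {a v : ℕ} (h1 : Th 2 a < v) (h2 : v ≤ Th 2 (a+1)) (h3 : v ≠ Th 2 a + 2) :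
    ¬ ∃ r, v = Th 2 r + 2 := by
  have h := notQ (k := 1) (a := a) h1 h2 h3
  intro ⟨r, hr⟩
  exact h ⟨r, hr⟩

lemma notQ3 {a v : ℕ} (h1 : Th 3 a < v) (h2 : v ≤ Th 3 (a+1)) (h3 : v ≠ Th 3 a + 3) :
    ¬ ∃ r, v = Th 3 r + 3 := by
  have h := notQ (k := 2) (a := a) h1 h2 h3
  intro ⟨r, hr⟩
  exact h ⟨r, hr⟩

lemma s_block' {K r : ℕ} {L : List (Fin 2)} (hL : blk K (s r) = L) (c : ℕ)
    (hc : c < L.length) : s (Th K r + c) = L.getD c 0 := by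
  have := s_block K r c (by rw [hL]; exact hc)
  rwa [hL] at this

lemma Th_succ_len {K r : ℕ} {L : List (Fin 2)} (hL : blk K (s r) = L) :
    Th K (r+1) = Th K r + L.length := by rw [Th_succ', hL]

lemma blk2_one {r : ℕ} (h : s r = 1) : blk 2 (s r) = [1,0,1] := by
  rw [h, blk_one]; decide

lemma blk2_zero {r : ℕ} (h : ¬ s r = 1) : blk 2 (s r) = [1,0] := by
  rw [blk_ne _ h]; decide

lemma blk3_one {r : ℕ} (h : s r = 1) : blk 3 (s r) = [1,0,1,1,0] := by
  rw [h, blk_one]; decide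

lemma blk3_zero {r : ℕ} (h : ¬ s r = 1) : blk 3 (s r) = [1,0,1] := by
  rw [blk_ne _ h]; decide

lemma ones_char (z : ℕ) : s z = 1 ↔ ∃ r, z = Th 1 r := by
  obtain ⟨r, h1, h2⟩ := Th_cover 1 z
  constructor
  · intro hz
    by_cases hsr : s r = 1
    · have hL : blk 1 (s r) = [1,0] := by rw [hsr, blk_one]; decide
      have hlen := Th_succ_len hL
      obtain ⟨c, hc, rfl⟩ : ∃ c, c < 2 ∧ z = Th 1 r + c :=
        ⟨z - Th 1 r, by simp at hlen; omega, by omega⟩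
      interval_cases c
      · exact ⟨r, by omega⟩
      · have := s_block' hL 1 (by decide)
        rw [this] at hz
        exact absurd hz (by decide)
    · have hL : blk 1 (s r) = [1] := by rw [blk_ne _ hsr]; decide
      have hlen := Th_succ_len hL
      have : z = Th 1 r := by simp at hlen; omega
      exact ⟨r, this⟩
  · rintro ⟨r', rfl⟩
    exact s_Th_start 1 r' (by omega)

lemma zeros_char (z : ℕ) : s z = 0 ↔ ∃ r, z = Th 2 r + 1 := by
  obtain ⟨r, h1, h2⟩ := Th_cover 2 z
  have huniq : ∀ r' c', c' < 2 → Th 2 r' + c' = z → r' = r := by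
    intro r' c' hc' he
    have hst := Th_step_ge 2 r'
    have : F 2 = 2 := rfl
    exact Th_cover_unique (by omega) (by omega) h1 h2
  constructor
  · intro hz
    by_cases hsr : s r = 1
    · have hL := blk2_one hsr
      have hlen := Th_succ_len hL
      obtain ⟨c, hc, rfl⟩ : ∃ c, c < 3 ∧ z = Th 2 r + c :=
        ⟨z - Th 2 r, by simp at hlen; omega, by omega⟩
      interval_cases c
      · rw [show Th 2 r + 0 = Th 2 r by omega, s_Th_start 2 r (by omega)] at hz
        exact absurd hz (by decide)
      · exact ⟨r, rfl⟩
      · rw [s_block' hL 2 (by decide)] at hz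
        exact absurd hz (by decide)
    · have hL := blk2_zero hsr
      have hlen := Th_succ_len hL
      obtain ⟨c, hc, rfl⟩ : ∃ c, c < 2 ∧ z = Th 2 r + c :=
        ⟨z - Th 2 r, by simp at hlen; omega, by omega⟩
      interval_cases c
      · rw [show Th 2 r + 0 = Th 2 r by omega, s_Th_start 2 r (by omega)] at hz
        exact absurd hz (by decide)
      · exact ⟨r, rfl⟩
  · rintro ⟨r', rfl⟩
    exact s_Th_start1 2 r' (by omega)

lemma no00 (z : ℕ) (h0 : s z = 0) (h1 : s (z+1) = 0) : False := by
  obtain ⟨a, ha⟩ := (zeros_char z).mp h0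
  obtain ⟨b, hb⟩ := (zeros_char (z+1)).mp h1
  have heq : Th 2 b = Th 2 a + 1 := by omega
  have hst := Th_step_ge 2 a
  have h2 : F 2 = 2 := rfl
  rcases Nat.lt_trichotomy a b with h | h | h
  · have := Th_mono 2 (show a + 1 ≤ b by omega); omega
  · subst h; omega
  · have := Th_mono 2 (show b ≤ a by omega); omega

lemma fin2_xor : ∀ a b c : Fin 2, (a ≠ c) ↔ ((a ≠ b) ↔ ¬(b ≠ c)) := by decide

/-- index-set镜 key lemma for the inductive step -/
lemma key_step (K : ℕ) (v : ℕ) (hv : 1 ≤ v) :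
    ((∃ r, v = Th K r) ∧ ¬(∃ r, v = Th K (Th 1 r + 1))) ↔
      ∃ r, v = Th K (Th 2 r + 2) := by
  constructor
  · rintro ⟨⟨w, rfl⟩, hno⟩
    have hw : 1 ≤ w := by
      by_contra h
      have : w = 0 := by omega
      subst this
      rw [Th_zero] at hv; omega
    have hs0 : s (w-1) ≠ 1 := by
      intro h1
      obtain ⟨r, hr⟩ := (ones_char (w-1)).mp h1
      exact hno ⟨r, by rw [← hr]; congr 1; omega⟩
    have hs : s (w-1) = 0 := (by decide : ∀ a : Fin 2, a ≠ 1 → a = 0) _ hs0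
    obtain ⟨z, hz⟩ := (zeros_char (w-1)).mp hs
    exact ⟨z, by congr 1; omega⟩
  · rintro ⟨z, rfl⟩
    refine ⟨⟨Th 2 z + 2, rfl⟩, ?_⟩
    rintro ⟨r, hr⟩
    have := Th_inj K hr
    have h1 : s (Th 2 z + 1) = 1 := (ones_char _).mpr ⟨r, by omega⟩
    have h0 : s (Th 2 z + 1) = 0 := s_Th_start1 2 z (by omega)
    rw [h0] at h1
    exact absurd h1 (by decide)

theorem Mchar : ∀ k, 1 ≤ k → ∀ j,
    (s j ≠ s (j + F k) ↔
      ∃ r, j + 2 = Th (k+1) r + F (k+1) ∨ j + 1 = Th (k+1) r + F (k+1)) := by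
  intro k
  induction k using Nat.strong_induction_on with
  | _ k ih =>
  match k with
  | 0 => intro h; exact absurd h (by omega)
  | 1 => 
    intro _ j
    show s j ≠ s (j + 1) ↔ ∃ r, j + 2 = Th 2 r + 2 ∨ j + 1 = Th 2 r + 2
    obtain ⟨r, h1, h2⟩ := Th_cover 2 j
    by_cases hsr : s r = 1
    · have hL := blk2_one hsr
      have hlen := Th_succ_len hL
      simp only [List.length_cons, List.length_nil] at hlen
      obtain ⟨c, hc, rfl⟩ : ∃ c, c < 3 ∧ j = Th 2 r + c :=
        ⟨j - Th 2 r, by omega, by omega⟩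
      have e0 : s (Th 2 r) = 1 := s_Th_start 2 r (by omega)
      have e1 : s (Th 2 r + 1) = 0 := by rw [s_block' hL 1 (by decide)]; rfl
      have e2 : s (Th 2 r + 2) = 1 := by rw [s_block' hL 2 (by decide)]; rfl
      have e3 : s (Th 2 (r+1)) = 1 := s_Th_start 2 (r+1) (by omega)
      interval_cases c
      · rw [show Th 2 r + 0 = Th 2 r by omega, show Th 2 r + 1 = Th 2 r + 1 by omega]
        rw [e0, e1]
        simp only [ne_eq, show ((1:Fin 2) = 0) ↔ False by decide]
        constructor
        · intro _; exact ⟨r, Or.inl (by omega)⟩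
        · intro _; simp
      · rw [show Th 2 r + 1 + 1 = Th 2 r + 2 by omega, e1, e2]
        simp only [ne_eq, show ((0:Fin 2) = 1) ↔ False by decide]
        constructor
        · intro _; exact ⟨r, Or.inr (by omega)⟩
        · intro _; simp
      · rw [show Th 2 r + 2 + 1 = Th 2 (r+1) by omega, e2, e3]
        simp only [ne_eq, not_true, show ((1:Fin 2) = 1) ↔ True by decide]
        constructor
        · simp
        · rintro ⟨r', hor⟩
          have hst := Th_step_ge 2 (r+1)
          have hF2 : F 2 = 2 := rfl
          rcases hor with h | h
          · exact notQ2 (a := r+1) (by omega) (by omega) (by omega) ⟨r', h⟩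
          · exact notQ2 (a := r) (by omega) (by omega) (by omega) ⟨r', h⟩
    · have hL := blk2_zero hsr
      have hlen := Th_succ_len hL
      simp only [List.length_cons, List.length_nil] at hlen
      obtain ⟨c, hc, rfl⟩ : ∃ c, c < 2 ∧ j = Th 2 r + c :=
        ⟨j - Th 2 r, by omega, by omega⟩
      have e0 : s (Th 2 r) = 1 := s_Th_start 2 r (by omega)
      have e1 : s (Th 2 r + 1) = 0 := by rw [s_block' hL 1 (by decide)]; rfl
      have e3 : s (Th 2 (r+1)) = 1 := s_Th_start 2 (r+1) (by omega)
      interval_cases c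
      · rw [show Th 2 r + 0 = Th 2 r by omega]
        rw [e0, e1]
        simp only [ne_eq, show ((1:Fin 2) = 0) ↔ False by decide]
        constructor
        · intro _; exact ⟨r, Or.inl (by omega)⟩
        · intro _; simp
      · rw [show Th 2 r + 1 + 1 = Th 2 (r+1) by omega, e1, e3]
        simp only [ne_eq, show ((0:Fin 2) = 1) ↔ False by decide]
        constructor
        · intro _; exact ⟨r, Or.inr (by omega)⟩
        · intro _; simp
  | 2 =>
    intro _ j
    show s j ≠ s (j + 2) ↔ ∃ r, j + 2 = Th 3 r + 3 ∨ j + 1 = Th 3 r + 3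
    obtain ⟨r, h1, h2⟩ := Th_cover 3 j
    have hF3 : F 3 = 3 := rfl
    by_cases hsr : s r = 1
    · have hL := blk3_one hsr
      have hlen := Th_succ_len hL
      simp only [List.length_cons, List.length_nil] at hlen
      obtain ⟨c, hc, rfl⟩ : ∃ c, c < 5 ∧ j = Th 3 r + c :=
        ⟨j - Th 3 r, by omega, by omega⟩
      have e0 : s (Th 3 r) = 1 := s_Th_start 3 r (by omega)
      have e1 : s (Th 3 r + 1) = 0 := by rw [s_block' hL 1 (by decide)]; rfl
      have e2 : s (Th 3 r + 2) = 1 := by rw [s_block' hL 2 (by decide)]; rfl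
      have e3 : s (Th 3 r + 3) = 1 := by rw [s_block' hL 3 (by decide)]; rfl
      have e4 : s (Th 3 r + 4) = 0 := by rw [s_block' hL 4 (by decide)]; rfl
      have e5 : s (Th 3 (r+1)) = 1 := s_Th_start 3 (r+1) (by omega)
      have e6 : s (Th 3 (r+1) + 1) = 0 := s_Th_start1 3 (r+1) (by omega)
      have hst := Th_step_ge 3 (r+1)
      interval_cases c
      · rw [show Th 3 r + 0 = Th 3 r by omega, show Th 3 r + 2 = Th 3 r + 2 by omega, e0, e2]
        simp only [ne_eq, not_true, show ((1:Fin 2) = 1) ↔ True by decide]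
        constructor
        · simp
        · rintro ⟨r', hor⟩
          rcases hor with h | h
          · exact notQ3 (a := r) (by omega) (by omega) (by omega) ⟨r', h⟩
          · exact notQ3 (a := r) (by omega) (by omega) (by omega) ⟨r', h⟩
      · rw [show Th 3 r + 1 + 2 = Th 3 r + 3 by omega, e1, e3]
        simp only [ne_eq, show ((0:Fin 2) = 1) ↔ False by decide]
        constructor
        · intro _; exact ⟨r, Or.inl (by omega)⟩
        · intro _; simp
      · rw [show Th 3 r + 2 + 2 = Th 3 r + 4 by omega, e2, e4]
        simp only [ne_eq, show ((1:Fin 2) = 0) ↔ False by decide]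
        constructor
        · intro _; exact ⟨r, Or.inr (by omega)⟩
        · intro _; simp
      · rw [show Th 3 r + 3 + 2 = Th 3 (r+1) by omega, e3, e5]
        simp only [ne_eq, not_true, show ((1:Fin 2) = 1) ↔ True by decide]
        constructor
        · simp
        · rintro ⟨r', hor⟩
          rcases hor with h | h
          · exact notQ3 (a := r) (by omega) (by omega) (by omega) ⟨r', h⟩
          · exact notQ3 (a := r) (by omega) (by omega) (by omega) ⟨r', h⟩
      · rw [show Th 3 r + 4 + 2 = Th 3 (r+1) + 1 by omega, e4, e6]
        simp only [ne_eq, not_true, show ((0:Fin 2) = 0) ↔ True by decide]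
        constructor
        · simp
        · rintro ⟨r', hor⟩
          rcases hor with h | h
          · exact notQ3 (a := r+1) (by omega) (by omega) (by omega) ⟨r', h⟩
          · exact notQ3 (a := r) (by omega) (by omega) (by omega) ⟨r', h⟩
    · have hL := blk3_zero hsr
      have hlen := Th_succ_len hL
      simp only [List.length_cons, List.length_nil] at hlen
      obtain ⟨c, hc, rfl⟩ : ∃ c, c < 3 ∧ j = Th 3 r + c :=
        ⟨j - Th 3 r, by omega, by omega⟩
      have e0 : s (Th 3 r) = 1 := s_Th_start 3 r (by omega)
      have e1 : s (Th 3 r + 1) = 0 := by rw [s_block' hL 1 (by decide)]; rfl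
      have e2 : s (Th 3 r + 2) = 1 := by rw [s_block' hL 2 (by decide)]; rfl
      have e5 : s (Th 3 (r+1)) = 1 := s_Th_start 3 (r+1) (by omega)
      have e6 : s (Th 3 (r+1) + 1) = 0 := s_Th_start1 3 (r+1) (by omega)
      have hst := Th_step_ge 3 (r+1)
      interval_cases c
      · rw [show Th 3 r + 0 = Th 3 r by omega, e0, e2]
        simp only [ne_eq, not_true, show ((1:Fin 2) = 1) ↔ True by decide]
        constructor
        · simp
        · rintro ⟨r', hor⟩
          rcases hor with h | h
          · exact notQ3 (a := r) (by omega) (by omega) (by omega) ⟨r', h⟩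
          · exact notQ3 (a := r) (by omega) (by omega) (by omega) ⟨r', h⟩
      · rw [show Th 3 r + 1 + 2 = Th 3 (r+1) by omega, e1, e5]
        simp only [ne_eq, show ((0:Fin 2) = 1) ↔ False by decide]
        constructor
        · intro _; exact ⟨r, Or.inl (by omega)⟩
        · intro _; simp
      · rw [show Th 3 r + 2 + 2 = Th 3 (r+1) + 1 by omega, e2, e6]
        simp only [ne_eq, show ((1:Fin 2) = 0) ↔ False by decide]
        constructor
        · intro _; exact ⟨r, Or.inr (by omega)⟩
        · intro _; simp
  | (k+3) =>
    intro _ j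
    have ihA := ih (k+2) (by omega) (by omega) j
    have ihB := ih (k+1) (by omega) (by omega) (j + F (k+2))
    simp only [show k+1+1 = k+2 from rfl, show k+2+1 = k+3 from rfl,
      show k+3+1 = k+4 from rfl] at ihA ihB ⊢
    -- XOR split
    have hsplit : (s j ≠ s (j + F (k+3))) ↔
        ((s j ≠ s (j + F (k+2))) ↔ ¬(s (j + F (k+2)) ≠ s (j + F (k+2) + F (k+1)))) := by
      have he : j + F (k+2) + F (k+1) = j + F (k+3) := by
        rw [show F (k+3) = F (k+2) + F (k+1) from rfl]; omega
      rw [he]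
      exact fin2_xor _ _ _
    rw [hsplit, ihA, ihB]
    -- rewrite B-form
    have hBform : (∃ r, j + F (k+2) + 2 = Th (k+2) r + F (k+2)
          ∨ j + F (k+2) + 1 = Th (k+2) r + F (k+2))
        ↔ (∃ r, j + 2 = Th (k+2) r ∨ j + 1 = Th (k+2) r) := by
      constructor
      · rintro ⟨r, h | h⟩
        · exact ⟨r, Or.inl (by omega)⟩
        · exact ⟨r, Or.inr (by omega)⟩
      · rintro ⟨r, h | h⟩
        · exact ⟨r, Or.inl (by omega)⟩
        · exact ⟨r, Or.inr (by omega)⟩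
    rw [hBform]
    -- rewrite A-form via composition
    have hYv : ∀ r, Th (k+3) r + F (k+3) = Th (k+2) (Th 1 r + 1) := by
      intro r
      have hc : Th (k+2) (Th 1 r) = Th (k+3) r := by
        have h := Th_comp (k+2) 1 r
        rwa [show k+2+1 = k+3 from rfl] at h
      rw [Th_succ, hc, s_Th_start 1 r (by omega), if_pos rfl]
    have hTv : ∀ r, Th (k+4) r + F (k+4) = Th (k+2) (Th 2 r + 2) := by
      intro r
      have hc : Th (k+2) (Th 2 r) = Th (k+4) r := by
        have h := Th_comp (k+2) 2 r
        rwa [show k+2+2 = k+4 from rfl] at h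
      rw [show Th 2 r + 2 = Th 2 r + 1 + 1 from rfl, Th_succ, Th_succ, hc,
        s_Th_start 2 r (by omega), if_pos rfl, s_Th_start1 2 r (by omega)]
      rw [if_neg (by decide)]
      rw [show F (k+4) = F (k+3) + F (k+2) from rfl,
        show F (k+3) = F (k+2) + F (k+1) from rfl]
      omega
    simp only [hYv, hTv]
    -- index-set facts
    have hPT2 := key_step (k+2) (j+2) (by omega)
    have hPT1 := key_step (k+2) (j+1) (by omega)
    have hAB2 : (∃ r, j + 2 = Th (k+2) (Th 1 r + 1)) → (∃ r, j + 2 = Th (k+2) r) :=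
      fun ⟨r, hr⟩ => ⟨Th 1 r + 1, hr⟩
    have hAB1 : (∃ r, j + 1 = Th (k+2) (Th 1 r + 1)) → (∃ r, j + 1 = Th (k+2) r) :=
      fun ⟨r, hr⟩ => ⟨Th 1 r + 1, hr⟩
    have hexcl : ¬((∃ r, j + 1 = Th (k+2) r) ∧ (∃ r, j + 2 = Th (k+2) r)) := by
      rintro ⟨⟨a, ha⟩, ⟨b, hb⟩⟩
      have hab : a < b := by
        by_contra h
        have := Th_mono (k+2) (show b ≤ a by omega)
        omega
      have h1 := Th_mono (k+2) (show a + 1 ≤ b by omega)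
      have h2 := Th_step_ge (k+2) a
      have hF : 2 ≤ F (k+2) := by
        have h3 := F_strictMonoOn 1 (k+2) le_rfl (by omega)
        rw [F1] at h3; omega
      omega
    simp only [exists_or]
    constructor
    · intro h
      by_cases hB2 : ∃ r, j + 2 = Th (k+2) r
      · have hB1 : ¬∃ r, j + 1 = Th (k+2) r := fun hh => hexcl ⟨hh, hB2⟩
        have hA1 : ¬∃ r, j + 1 = Th (k+2) (Th 1 r + 1) := fun hh => hB1 (hAB1 hh)
        have hA2 : ¬∃ r, j + 2 = Th (k+2) (Th 1 r + 1) := by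
          intro hA2
          exact (h.mp (Or.inl hA2)) (Or.inl hB2)
        exact Or.inl (hPT2.mp ⟨hB2, hA2⟩)
      · by_cases hB1 : ∃ r, j + 1 = Th (k+2) r
        · have hA2 : ¬∃ r, j + 2 = Th (k+2) (Th 1 r + 1) := fun hh => hB2 (hAB2 hh)
          have hA1 : ¬∃ r, j + 1 = Th (k+2) (Th 1 r + 1) := by
            intro hA1
            exact (h.mp (Or.inr hA1)) (Or.inr hB1)
          exact Or.inr (hPT1.mp ⟨hB1, hA1⟩)
        · exfalso
          rcases h.mpr (fun hh => hh.elim hB2 hB1) with hA2 | hA1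
          · exact hB2 (hAB2 hA2)
          · exact hB1 (hAB1 hA1)
    · intro hT
      rcases hT with hT2 | hT1
      · obtain ⟨hB2, hA2⟩ := hPT2.mpr hT2
        have hB1 : ¬∃ r, j + 1 = Th (k+2) r := fun hh => hexcl ⟨hh, hB2⟩
        have hA1 : ¬∃ r, j + 1 = Th (k+2) (Th 1 r + 1) := fun hh => hB1 (hAB1 hh)
        constructor
        · rintro (hh | hh)
          · exact absurd hh hA2
          · exact absurd hh hA1
        · intro hnB
          exact (hnB (Or.inl hB2)).elim
      · obtain ⟨hB1, hA1⟩ := hPT1.mpr hT1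
        have hB2 : ¬∃ r, j + 2 = Th (k+2) r := fun hh => hexcl ⟨hB1, hh⟩
        have hA2 : ¬∃ r, j + 2 = Th (k+2) (Th 1 r + 1) := fun hh => hB2 (hAB2 hh)
        constructor
        · rintro (hh | hh)
          · exact absurd hh hA2
          · exact absurd hh hA1
        · intro hnB
          exact (hnB (Or.inr hB1)).elim


def pt (k j : ℕ) : Prop :=
  ∃ r, j + 2 = Th (k+1) r + F (k+1) ∨ j + 1 = Th (k+1) r + F (k+1)

lemma Mchar' (k : ℕ) (hk : 1 ≤ k) (j : ℕ) : (s j ≠ s (j + F k)) ↔ pt k j :=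
  Mchar k hk j

lemma F_ge_two (k : ℕ) : 2 ≤ F (k+2) := by
  rw [F_add_two]; have := F_pos k; have := F_pos (k+1); omega

lemma F_lt_succ (k : ℕ) (hk : 1 ≤ k) : F k < F (k+1) := F_strictMonoOn k (k+1) hk (by omega)

lemma gap_point (k : ℕ) (hk : 1 ≤ k) (x : ℕ) :
    ∃ j, x ≤ j ∧ j + 1 < x + F (k+2) ∧ pt k j := by
  have hF1 : 2 ≤ F (k+1) := by
    have := F_ge_two (k-1)
    have : F (k+1) = F (k-1+2) := by congr 1; omega
    omega
  have hF2 : F (k+1) ≤ F (k+2) := F_le_succ (k+1)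
  have hF3 : 2 ≤ F (k+2) := F_ge_two k
  by_cases h0 : x + 2 ≤ Th (k+1) 0 + F (k+1)
  · refine ⟨Th (k+1) 0 + F (k+1) - 2, by omega, ?_, ⟨0, Or.inl (by omega)⟩⟩
    have h2 : Th (k+1) 0 = 0 := rfl
    omega
  · have hex : ∃ r, x + 2 ≤ Th (k+1) r + F (k+1) :=
      ⟨x+2, by have := Th_r_le (k+1) (x+2); omega⟩
    have hr := Nat.find_spec hex
    have hrpos : Nat.find hex ≠ 0 := by
      intro h
      rw [h] at hr
      exact h0 hr
    obtain ⟨r', hre⟩ : ∃ r', Nat.find hex = r' + 1 := ⟨Nat.find hex - 1, by omega⟩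
    rw [hre] at hr
    have hprev : ¬ (x + 2 ≤ Th (k+1) r' + F (k+1)) := Nat.find_min hex (by omega)
    have hstep : Th (k+1) (r'+1) ≤ Th (k+1) r' + F (k+2) := Th_step_le (k+1) r'
    by_cases hcase : Th (k+1) (r'+1) + F (k+1) ≤ x + F (k+2)
    · exact ⟨Th (k+1) (r'+1) + F (k+1) - 2, by omega, by omega,
        ⟨r'+1, Or.inl (by omega)⟩⟩
    · exact ⟨x, le_rfl, by omega, ⟨r', Or.inr (by omega)⟩⟩

lemma pt_sep {k j j' : ℕ} (h : pt k j) (h' : pt k j') (hd : j + 2 ≤ j') :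
    j + F (k+1) ≤ j' + 1 := by
  obtain ⟨a, ha⟩ := h
  obtain ⟨b, hb⟩ := h'
  have hab : a < b := by
    by_contra hcon
    have := Th_mono (k+1) (show b ≤ a by omega)
    omega
  have h1 := Th_mono (k+1) (show a+1 ≤ b by omega)
  have h2 := Th_step_ge (k+1) a
  rcases ha with ha | ha <;> rcases hb with hb | hb <;> omega

lemma pt_adj {k j : ℕ} (hk : 2 ≤ k) (h : pt k j) (h' : pt k (j+1)) :
    ∃ r, j + 2 = Th (k+1) r + F (k+1) := by
  obtain ⟨a, ha⟩ := h
  obtain ⟨b, hb⟩ := h'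
  have hF : 3 ≤ F (k+1) := by
    have h3 : F 3 ≤ F (k+1) := F_mono (show 3 ≤ k+1 by omega)
    have : F 3 = 3 := rfl
    omega
  rcases ha with ha | ha
  · exact ⟨a, ha⟩
  · exfalso
    have hab : a < b := by
      by_contra hcon
      have := Th_mono (k+1) (show b ≤ a by omega)
      rcases hb with hb | hb <;> omega
    have h1 := Th_mono (k+1) (show a+1 ≤ b by omega)
    have h2 := Th_step_ge (k+1) a
    rcases hb with hb | hb <;> omega

lemma F_bracket (l : ℕ) (hl : 3 ≤ l) : ∃ k, F (k+3) ≤ l ∧ l < F (k+4) := by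
  induction l with
  | zero => omega
  | succ n ih =>
    rcases Nat.lt_or_ge n 3 with h | h
    · have hn : n = 2 := by omega
      subst hn
      exact ⟨0, by decide, by decide⟩
    · obtain ⟨k, h1, h2⟩ := ih h
      rcases Nat.lt_or_ge (n+1) (F (k+4)) with h3 | h3
      · exact ⟨k, by omega, h3⟩
      · refine ⟨k+1, ?_, ?_⟩
        · have e : F (k+1+3) = F (k+4) := rfl
          omega
        · have e : F (k+1+4) = F (k+5) := rfl
          have h4 : F (k+5) = F (k+4) + F (k+3) := rfl
          have := F_pos (k+3)
          omega

lemma fib_kpos {m : ℕ} (h : ∃ a, F a = m) : ∃ κ, 1 ≤ κ ∧ F κ = m := by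
  obtain ⟨a, ha⟩ := h
  match a with
  | 0 => exact ⟨1, le_rfl, ha⟩
  | (a+1) => exact ⟨a+1, by omega, ha⟩

lemma pt_k1 {k j : ℕ} : pt (k+1) j ↔
    (∃ r, j + 2 = Th (k+2) r + F (k+2) ∨ j + 1 = Th (k+2) r + F (k+2)) := Iff.rfl

lemma fin2_middle : ∀ a b c : Fin 2, a = c → ((a ≠ b) ↔ (b ≠ c)) := by decide

theorem noSquare : ∀ l, 1 ≤ l → (∀ a, F a ≠ l) → ∀ i,
    ∃ c, c < l ∧ s (i + c) ≠ s (i + c + l) := by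
  intro l
  induction l using Nat.strong_induction_on with
  | _ l ih =>
  intro hl1 hFl i
  by_contra hcon
  push_neg at hcon
  have hc : ∀ c, c < l → s (i + c) = s (i + c + l) := fun c h => hcon c h
  have hl4 : 4 ≤ l := by
    have e1 : F 1 = 1 := rfl
    have e2 : F 2 = 2 := rfl
    have e3 : F 3 = 3 := rfl
    have := hFl 1
    have := hFl 2
    have := hFl 3
    omega
  obtain ⟨k, hbr1, hbr2⟩ := F_bracket l (by omega)
  obtain ⟨m, hmdef⟩ : ∃ m, l = F (k+3) + m := ⟨l - F (k+3), by omega⟩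
  have hm1 : 1 ≤ m := by
    have := hFl (k+3)
    omega
  have hm2 : m < F (k+2) := by
    have h4 : F (k+4) = F (k+3) + F (k+2) := rfl
    omega
  have hFk32 : F (k+2) ≤ F (k+3) := F_le_succ (k+2)
  -- correspondence
  have corr : ∀ c, c < l → (pt (k+3) (i+c) ↔ s (i + F (k+3) + c) ≠ s (i + F (k+3) + c + m)) := by
    intro c hcl
    have h1 : s (i+c) = s (i+c+l) := hc c hcl
    rw [← Mchar' (k+3) (by omega) (i+c)]
    have e2 : i + F (k+3) + c = i + c + F (k+3) := by omega
    have e3 : i + F (k+3) + c + m = i + c + l := by omega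
    rw [e3, e2]
    exact fin2_middle _ _ _ h1
  -- far-apart points at level k+3 are impossible
  have far : ∀ c c', c < l → c' < l → c + 2 ≤ c' →
      pt (k+3) (i+c) → pt (k+3) (i+c') → False := by
    intro c c' hcl hcl' hsep hp hp'
    have := pt_sep hp hp' (by omega)
    have hQ : l < F (k+4) := hbr2
    have : F (k+3+1) = F (k+4) := rfl
    omega
  by_cases hfib : ∃ a, F a = m
  · -- m is a Fibonacci number
    obtain ⟨κ, hκ1, hκm⟩ := fib_kpos hfib
    have hκlt : κ < k + 2 := by
      by_contra hcc
      have := F_mono (show k+2 ≤ κ by omega)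
      omega
    -- level-κ points in the shifted window
    have corrκ : ∀ c, c < l → (pt (k+3) (i+c) ↔ pt κ (i + F (k+3) + c)) := by
      intro c hcl
      rw [corr c hcl, ← hκm]
      exact Mchar' κ hκ1 _
    have farκ : ∀ c c', c < l → c' < l → c + 2 ≤ c' →
        pt κ (i + F (k+3) + c) → pt κ (i + F (k+3) + c') → False := by
      intro c c' h1 h2 h3 h4 h5
      exact far c c' h1 h2 h3 ((corrκ c h1).mpr h4) ((corrκ c' h2).mpr h5)
    rcases Nat.lt_or_ge κ (k+1) with hκcase | hκcase
    · -- κ ≤ k : density argument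
      obtain ⟨p1, hp1a, hp1b, hp1pt⟩ := gap_point κ hκ1 (i + F (k+3))
      obtain ⟨p2, hp2a, hp2b, hp2pt⟩ := gap_point κ hκ1 (i + F (k+3) + l + 1 - F (κ+2))
      have hdbl : 2 * F (κ+2) ≤ l := by
        have e1 : F (κ+3) = F (κ+2) + F (κ+1) := rfl
        have e2 : F (κ+2) = F (κ+1) + F κ := rfl
        have e3 : F (κ+3) ≤ F (k+3) := F_mono (by omega)
        omega
      have hFκ2 : 2 ≤ F (κ+2) := F_ge_two κ
      obtain ⟨c1, hc1⟩ : ∃ c1, p1 = i + F (k+3) + c1 := ⟨p1 - (i + F (k+3)), by omega⟩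
      obtain ⟨c2, hc2⟩ : ∃ c2, p2 = i + F (k+3) + c2 := ⟨p2 - (i + F (k+3)), by omega⟩
      refine farκ c1 c2 (by omega) (by omega) (by omega) (by rwa [← hc1]) (by rwa [← hc2])
    · -- κ = k+1 : alignment case
      have hκeq : κ = k + 1 := by omega
      subst hκeq
      have hF23 : F (k+1+2) = F (k+3) := rfl
      obtain ⟨p0, hp0a, hp0b, hp0pt⟩ := gap_point (k+1) (by omega) (i + F (k+3))
      rw [hF23] at hp0b
      -- produce an aligned full pair ⟨P, pair-start equation⟩ with both elts in window
      have halign : ∀ P a, i + F (k+3) ≤ P → P + 1 < i + F (k+3) + l →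
          P + 2 = Th (k+2) a + F (k+2) → False := by
        intro P a hPlo hPhi hPa
        obtain ⟨c, hcdef⟩ : ∃ c, P = i + F (k+3) + c := ⟨P - (i + F (k+3)), by omega⟩
        have hptP : pt (k+1) (i + F (k+3) + c) := pt_k1.mpr ⟨a, Or.inl (by omega)⟩
        have hptP1 : pt (k+1) (i + F (k+3) + (c+1)) := pt_k1.mpr ⟨a, Or.inr (by omega)⟩
        have hpt3 : pt (k+3) (i + c) := (corrκ c (by omega)).mpr hptP
        have hpt3' : pt (k+3) (i + (c+1)) := (corrκ (c+1) (by omega)).mpr hptP1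
        have hadj : ∃ b, (i + c) + 2 = Th (k+3+1) b + F (k+3+1) := by
          apply pt_adj (by omega) hpt3
          have : i + (c+1) = (i + c) + 1 := by omega
          rwa [this] at hpt3'
        obtain ⟨b, hb⟩ := hadj
        rw [show k+3+1 = k+4 from rfl] at hb
        -- composition and steps
        have hcomp : Th (k+2) (Th 2 b) = Th (k+4) b := by
          have h := Th_comp (k+2) 2 b
          rwa [show k+2+2 = k+4 from rfl] at h
        have hsu : s (Th 2 b) = 1 := s_Th_start 2 b (by omega)
        have hsu1 : s (Th 2 b + 1) = 0 := s_Th_start1 2 b (by omega)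
        have step1 : Th (k+2) (Th 2 b + 1) = Th (k+2) (Th 2 b) + F (k+3) := by
          rw [Th_succ, hsu, if_pos rfl]
        have step2 : Th (k+2) (Th 2 b + 1 + 1) = Th (k+2) (Th 2 b + 1) + F (k+2) := by
          rw [Th_succ, hsu1]
          norm_num
        have step3 := Th_step_ge (k+2) (Th 2 b + 2)
        have e4 : F (k+4) = F (k+3) + F (k+2) := rfl
        have e3 : F (k+3) = F (k+2) + F (k+1) := rfl
        have hThA : Th (k+2) a = Th (k+2) (Th 2 b + 2) + F (k+1) := by
          have e5 : Th 2 b + 1 + 1 = Th 2 b + 2 := rfl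
          rw [← e5]
          omega
        have hlt : F (k+1) < F (k+2) := F_lt_succ (k+1) (by omega)
        have hlt2 : Th (k+2) (Th 2 b + 2) < Th (k+2) a := by
          have := F_pos (k+1)
          omega
        have hab : Th 2 b + 2 < a := (Th_strictMono (k+2)).lt_iff_lt.mp hlt2
        have h5 : Th (k+2) (Th 2 b + 2 + 1) ≤ Th (k+2) a := Th_mono (k+2) (by omega)
        omega
      -- now find the aligned pair from p0
      rcases hp0pt with ⟨a, ha | ha⟩
      · -- p0 is a pair start
        rw [show k+1+1 = k+2 from rfl] at ha
        exact halign p0 a hp0a (by omega) ha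
      · rw [show k+1+1 = k+2 from rfl] at ha
        by_cases hPge : i + F (k+3) + 1 ≤ p0
        · -- P = p0 - 1 is the pair start, inside the window
          exact halign (p0 - 1) a (by omega) (by omega) (by omega)
        · -- p0 = i + F (k+3) : use the next pair
          have hp0eq : p0 = i + F (k+3) := by omega
          have hnxt1 := Th_step_ge (k+2) a
          have hnxt2 := Th_step_le (k+2) a
          have hq : pt (k+1) (Th (k+2) (a+1) + F (k+2) - 1) := by
            refine pt_k1.mpr ⟨a+1, Or.inr ?_⟩
            have h6 := Th_r_le (k+2) (a+1)
            have := F_pos (k+2)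
            omega
          have hF2pos : 2 ≤ F (k+2) := F_ge_two k
          have hq1 : Th (k+2) (a+1) + F (k+2) - 1 ≥ i + F (k+3) + 2 := by
            have : F (k+2+1) = F (k+3) := rfl
            omega
          have hq2 : Th (k+2) (a+1) + F (k+2) - 1 < i + F (k+3) + l := by
            have : F (k+2+1) = F (k+3) := rfl
            omega
          obtain ⟨c', hc'⟩ : ∃ c', Th (k+2) (a+1) + F (k+2) - 1 = i + F (k+3) + c' :=
            ⟨Th (k+2) (a+1) + F (k+2) - 1 - (i + F (k+3)), by omega⟩
          refine farκ 0 c' (by omega) (by omega) (by omega) ?_ (by rwa [← hc'])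
          rw [show i + F (k+3) + 0 = p0 by omega]
          exact pt_k1.mpr ⟨a, Or.inr (by omega)⟩
  · -- m is not Fibonacci : strong induction
    have hml : m < l := by omega
    have hnf : ∀ a, F a ≠ m := fun a h => hfib ⟨a, h⟩
    obtain ⟨c1, hc1l, hc1m⟩ := ih m hml (by omega) hnf (i + F (k+3))
    obtain ⟨c2, hc2l, hc2m⟩ := ih m hml (by omega) hnf (i + F (k+3) + (l - m))
    have hp1 : pt (k+3) (i + c1) := (corr c1 (by omega)).mpr hc1m
    have hp2 : pt (k+3) (i + (l - m + c2)) := by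
      refine (corr (l - m + c2) (by omega)).mpr ?_
      have e : i + F (k+3) + (l - m + c2) = i + F (k+3) + (l - m) + c2 := by omega
      rw [e]
      exact hc2m
    exact far c1 (l - m + c2) (by omega) (by omega) (by omega) hp1 hp2


lemma s_last : ∀ m, 1 ≤ m → s (F m - 1) = if m % 2 = 1 then 1 else 0 := by
  intro m
  induction m using Nat.twoStepInduction with
  | zero => omega
  | one => intro _; decide
  | more m ih1 ih2 =>
    intro _
    match m, ih1 with
    | 0, _ => decide
    | (m+1), ih1 =>
      have hsh : s (F (m+1+1+1) - 1) = s (F (m+1) - 1) := by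
        have h1 : F (m+1+1+1) = F (m+1+1) + F (m+1) := rfl
        have h2 : F (m+1+1) = F (m+1+1) := rfl
        have := F_pos (m+1)
        have e : F (m+1+1+1) - 1 = F (m+1+1) + (F (m+1) - 1) := by omega
        rw [e, s_shift (by omega) (by omega)]
      rw [hsh, ih1 (by omega)]
      have : (m+1+1+1) % 2 = (m+1) % 2 := by omega
      rw [this]

lemma s_last2 : ∀ m, 2 ≤ m → m % 2 = 0 → s (F m - 2) = 1 := by
  intro m
  induction m using Nat.twoStepInduction with
  | zero => omega
  | one => omega
  | more m ih1 ih2 =>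
    intro _ hpar
    match m, ih1 with
    | 0, _ => decide
    | (m+1), ih1 =>
      have h2 : 2 ≤ F (m+1) := by
        have : F 2 ≤ F (m+1) := F_mono (by omega)
        have : F 2 = 2 := rfl
        omega
      have hsh : s (F (m+1+1+1) - 2) = s (F (m+1) - 2) := by
        have h1 : F (m+1+1+1) = F (m+1+1) + F (m+1) := rfl
        have e : F (m+1+1+1) - 2 = F (m+1+1) + (F (m+1) - 2) := by omega
        rw [e, s_shift (by omega) (by omega)]
      rw [hsh, ih1 (by omega) (by omega)]

lemma F_split (n : ℕ) (hn : 2 ≤ n) : F n = F (n-1) + F (n-2) := by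
  obtain ⟨p, rfl⟩ : ∃ p, n = p + 2 := ⟨n-2, by omega⟩
  rw [show p+2-1 = p+1 from by omega, show p+2-2 = p from by omega, F_add_two]

def Qv (k r : ℕ) : ℕ := Th (k+1) r + F (k+1)

lemma Qv_lb (k r : ℕ) (hk : 1 ≤ k) : F k + 1 ≤ Qv k r := by
  unfold Qv
  have h1 : F k < F (k+1) := F_lt_succ k hk
  omega

lemma Qv_mono_step (k r : ℕ) : Qv k r + F (k+1) ≤ Qv k (r+1) := by
  unfold Qv
  have := Th_step_ge (k+1) r
  omega

lemma Qv_mono {k : ℕ} {a b : ℕ} (h : a ≤ b) : Qv k a ≤ Qv k b := by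
  unfold Qv
  have := Th_mono (k+1) h
  omega

lemma window_hit (k i : ℕ) (hk : 1 ≤ k) :
    (∃ c, c < F k ∧ pt k (i+c)) ↔ ∃ r, i + 1 ≤ Qv k r ∧ Qv k r ≤ i + F k + 1 := by
  constructor
  · rintro ⟨c, hc, r, hr | hr⟩
    · exact ⟨r, by unfold Qv; omega, by unfold Qv; omega⟩
    · exact ⟨r, by unfold Qv; omega, by unfold Qv; omega⟩
  · rintro ⟨r, h1, h2⟩
    have hlb := Qv_lb k r hk
    rcases Nat.lt_or_ge (i+1) (Qv k r) with h3 | h3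
    · exact ⟨Qv k r - 2 - i, by omega, ⟨r, Or.inl (by unfold Qv at *; omega)⟩⟩
    · have h4 : Qv k r = i + 1 := by omega
      exact ⟨0, by have := F_pos k; omega, ⟨r, Or.inr (by unfold Qv at *; omega)⟩⟩

lemma filt_card (E a b : ℕ) :
    ((Finset.range (E+1)).filter (fun i => a ≤ i ∧ i ≤ b)).card = min b E + 1 - a := by
  have he : (Finset.range (E+1)).filter (fun i => a ≤ i ∧ i ≤ b) = Finset.Icc a (min b E) := by
    ext i
    simp only [Finset.mem_filter, Finset.mem_range, Finset.mem_Icc, le_min_iff, min_le_iff]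
    omega
  rw [he, Nat.card_Icc]

/-- the central counting lemma for the bad set -/
lemma count_bad (n k : ℕ) (hk : 1 ≤ k) (hkn : k + 2 ≤ n) :
    ((Finset.range (F n - 2 * F k + 1)).filter
        (fun i => ∃ c, c < F k ∧ s (i + c) ≠ s (i + c + F k))).card
      = (F (n-k-1) - 1) * (F k + 1)
        + (if (n-k-1) % 2 = 1 then 2 else if k = 1 then 1 else 0) := by
  set m := n - k - 1 with hm
  have hm1 : 1 ≤ m := by omega
  have hmn : m + k + 1 = n := by omega
  have hE1 : 2 * F k + 1 ≤ F n := by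
    have h1 : F k ≤ F (n-2) := F_mono (by omega)
    have h2 : F (n-2) < F (n-2+1) := F_lt_succ (n-2) (by omega)
    have e2 : n-2+1 = n-1 := by omega
    rw [e2] at h2
    have h3 : F n = F (n-1) + F (n-2) := F_split n (by omega)
    omega
  have hQtop : Qv k (F m) = F n + F (k+1) := by
    unfold Qv
    rw [Th_F (k+1) m hm1, show m + (k+1) = n from by omega]
  have hFk1 : F k < F (k+1) := F_lt_succ k hk
  have hFk2 : F (k+2) = F (k+1) + F k := rfl
  -- rewrite the bad set as a union of intervals
  have hset : (Finset.range (F n - 2 * F k + 1)).filter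
        (fun i => ∃ c, c < F k ∧ s (i + c) ≠ s (i + c + F k))
      = (Finset.range (F m)).biUnion (fun r =>
          (Finset.range (F n - 2 * F k + 1)).filter
            (fun i => Qv k r - (F k + 1) ≤ i ∧ i ≤ Qv k r - 1)) := by
    ext i
    simp only [Finset.mem_filter, Finset.mem_biUnion, Finset.mem_range]
    constructor
    · rintro ⟨hiE, c, hc, hmis⟩
      have hpt : pt k (i+c) := (Mchar' k hk (i+c)).mp hmis
      obtain ⟨r, h1, h2⟩ := (window_hit k i hk).mp ⟨c, hc, hpt⟩
      have hrlt : r < F m := by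
        by_contra hcon
        have := Qv_mono (k := k) (show F m ≤ r by omega)
        rw [hQtop] at this
        have := F_pos (k+1)
        omega
      have hlb := Qv_lb k r hk
      exact ⟨r, hrlt, hiE, by omega, by omega⟩
    · rintro ⟨r, hr, hiE, h1, h2⟩
      have hlb := Qv_lb k r hk
      refine ⟨hiE, ?_⟩
      obtain ⟨c, hc, hpt⟩ := (window_hit k i hk).mpr ⟨r, by omega, by omega⟩
      exact ⟨c, hc, (Mchar' k hk (i+c)).mpr hpt⟩
  rw [hset]
  -- disjointness
  have hdisj : ∀ r1 ∈ Finset.range (F m), ∀ r2 ∈ Finset.range (F m), r1 ≠ r2 →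
      Disjoint ((Finset.range (F n - 2 * F k + 1)).filter
            (fun i => Qv k r1 - (F k + 1) ≤ i ∧ i ≤ Qv k r1 - 1))
        ((Finset.range (F n - 2 * F k + 1)).filter
            (fun i => Qv k r2 - (F k + 1) ≤ i ∧ i ≤ Qv k r2 - 1)) := by
    intro r1 _ r2 _ hne
    have key : ∀ a b : ℕ, a < b → Disjoint ((Finset.range (F n - 2 * F k + 1)).filter
            (fun i => Qv k a - (F k + 1) ≤ i ∧ i ≤ Qv k a - 1))
        ((Finset.range (F n - 2 * F k + 1)).filter
            (fun i => Qv k b - (F k + 1) ≤ i ∧ i ≤ Qv k b - 1)) := by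
      intro a b hlt
      rw [Finset.disjoint_left]
      intro i hi1 hi2
      simp only [Finset.mem_filter, Finset.mem_range] at hi1 hi2
      have hs := Qv_mono_step k a
      have hmo : Qv k (a+1) ≤ Qv k b := Qv_mono (show a + 1 ≤ b by omega)
      have hlb := Qv_lb k a hk
      have hFk1' : 1 ≤ F (k-1) := F_pos (k-1)
      have hFsum : F (k+1) = F k + F (k-1) := by
        have e1 : F (k+1) = F ((k-1)+2) := by congr 1; omega
        rw [e1, F_add_two, show k-1+1 = k from by omega]
      omega
    rcases hne.lt_or_gt with h | h
    · exact key _ _ h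
    · exact (key _ _ h).symm
  rw [Finset.card_biUnion hdisj]
  -- evaluate each interval card
  have hcard : ∀ r, (((Finset.range (F n - 2 * F k + 1)).filter
      (fun i => Qv k r - (F k + 1) ≤ i ∧ i ≤ Qv k r - 1)).card)
      = min (Qv k r - 1) (F n - 2 * F k) + 1 - (Qv k r - (F k + 1)) :=
    fun r => filt_card (F n - 2 * F k) _ _
  -- value of Qv at F m - 1
  have hstep_last : Th (k+1) (F m) = Th (k+1) (F m - 1)
      + (if s (F m - 1) = 1 then F (k+2) else F (k+1)) := by
    have e : F m = (F m - 1) + 1 := by have := F_pos m; omega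
    conv_lhs => rw [e, Th_succ]
  have hQlast : Qv k (F m - 1)
      = if m % 2 = 1 then F n - F k else F n := by
    have hl := s_last m hm1
    unfold Qv at *
    rcases Nat.lt_or_ge (m % 2) 1 with hpar | hpar
    · have hp0 : m % 2 = 0 := by omega
      rw [hp0, if_neg (by omega : ¬(0:ℕ) = 1)] at hl
      rw [hp0, if_neg (by omega : ¬(0:ℕ) = 1)]
      rw [hl] at hstep_last
      have hite : (if (0:Fin 2) = 1 then F (k+2) else F (k+1)) = F (k+1) :=
        if_neg (by decide)
      rw [hite, Th_F (k+1) m hm1, show m + (k+1) = n from by omega] at hstep_last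
      omega
    · have hp1 : m % 2 = 1 := by omega
      rw [hp1, if_pos rfl] at hl
      rw [hp1, if_pos rfl]
      rw [hl] at hstep_last
      have hite : (if (1:Fin 2) = 1 then F (k+2) else F (k+1)) = F (k+2) :=
        if_pos rfl
      rw [hite, Th_F (k+1) m hm1, show m + (k+1) = n from by omega] at hstep_last
      omega
  -- bound for the earlier intervals
  have hQearly : ∀ r, r + 1 ≤ F m - 1 → Qv k r ≤ F n - 2 * F k + 1 := by
    intro r hr
    rcases Nat.lt_or_ge (m % 2) 1 with hpar | hpar
    · -- m even: use second-to-last letter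
      have hm2 : 2 ≤ m := by
        rcases Nat.lt_or_ge m 2 with h | h
        · interval_cases m <;> omega
        · exact h
      have hFm2 : 2 ≤ F m := by
        have : F 2 ≤ F m := F_mono hm2
        have : F 2 = 2 := rfl
        omega
      have hsl2 : s (F m - 2) = 1 := s_last2 m hm2 (by omega)
      have hstep2 : Th (k+1) (F m - 1) = Th (k+1) (F m - 2) + F (k+2) := by
        have e : F m - 1 = (F m - 2) + 1 := by omega
        rw [e, Th_succ, hsl2, if_pos rfl]
      have hmono : Qv k r ≤ Qv k (F m - 2) := Qv_mono (by omega)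
      have hle : F (k+2) + F (k+1) ≤ F n := by
        have g1 : F (k+2) ≤ F (n-1) := F_mono (by omega)
        have g2 : F (k+1) ≤ F (n-2) := F_mono (by omega)
        have h3 : F n = F (n-1) + F (n-2) := F_split n (by omega)
        omega
      have hQl2 : Qv k (F m - 2) = F n - F (k+2) := by
        have h1 : Qv k (F m - 1) = F n := by
          rw [hQlast, if_neg (by omega)]
        unfold Qv at h1 ⊢
        omega
      unfold Qv at *
      omega
    · -- m odd
      have h1 : Qv k (F m - 1) = F n - F k := by
        rw [hQlast, if_pos (by omega)]
      have hmono := Qv_mono_step k r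
      have hmono2 : Qv k (r+1) ≤ Qv k (F m - 1) := Qv_mono hr
      have hle : F k + F (k+1) ≤ F n := by
        have g1 : F (k+1) ≤ F (n-1) := F_mono (by omega)
        have g2 : F k ≤ F (n-2) := F_mono (by omega)
        have h3 : F n = F (n-1) + F (n-2) := F_split n (by omega)
        omega
      unfold Qv at *
      omega
  -- sum it up
  have hFm1 : F m = (F m - 1) + 1 := by have := F_pos m; omega
  rw [hFm1, Finset.sum_range_succ]
  have hsum1 : ∀ r ∈ Finset.range (F m - 1),
      (((Finset.range (F n - 2 * F k + 1)).filter
        (fun i => Qv k r - (F k + 1) ≤ i ∧ i ≤ Qv k r - 1)).card) = F k + 1 := by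
    intro r hr
    rw [hcard r]
    have hlb := Qv_lb k r hk
    have := hQearly r (by simpa using Finset.mem_range.mp hr)
    omega
  rw [Finset.sum_congr rfl hsum1, Finset.sum_const, Finset.card_range, smul_eq_mul]
  congr 1
  -- last interval
  rw [hcard (F m - 1)]
  have hlb := Qv_lb k (F m - 1) hk
  rcases Nat.lt_or_ge (m % 2) 1 with hpar | hpar
  · -- even : 1 if k = 1 else 0
    have h1 : Qv k (F m - 1) = F n := by rw [hQlast, if_neg (by omega)]
    rw [if_neg (by omega)]
    rcases Nat.lt_or_ge k 2 with hk1 | hk2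
    · have : k = 1 := by omega
      subst this
      rw [if_pos rfl]
      have e1 : F 1 = 1 := rfl
      omega
    · rw [if_neg (by omega)]
      have hF2 : 2 ≤ F k := by
        have : F 2 ≤ F k := F_mono hk2
        have : F 2 = 2 := rfl
        omega
      omega
  · -- odd : 2
    have h1 : Qv k (F m - 1) = F n - F k := by rw [hQlast, if_pos (by omega)]
    rw [if_pos (by omega)]
    have hpos := F_pos k
    omega


def goodset (n k : ℕ) : Finset ℕ :=
  (Finset.range (F n - 2 * F k + 1)).filter (fun i => ∀ c < F k, s (i + c) = s (i + c + F k))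

def epsN (n k : ℕ) : ℕ := if (n-k-1) % 2 = 1 then 2 else if k = 1 then 1 else 0

lemma good_count (n k : ℕ) (hk : 1 ≤ k) (hkn : k + 2 ≤ n) :
    (goodset n k).card + ((F (n-k-1) - 1) * (F k + 1) + epsN n k)
      = F n - 2 * F k + 1 := by
  have hsplit := Finset.card_filter_add_card_filter_not
    (s := Finset.range (F n - 2 * F k + 1))
    (p := fun i => ∀ c < F k, s (i + c) = s (i + c + F k))
  have hneg : (Finset.range (F n - 2 * F k + 1)).filter
        (fun i => ¬ ∀ c < F k, s (i + c) = s (i + c + F k))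
      = (Finset.range (F n - 2 * F k + 1)).filter
        (fun i => ∃ c, c < F k ∧ s (i + c) ≠ s (i + c + F k)) := by
    apply Finset.filter_congr
    intro i _
    constructor
    · intro h
      push_neg at h
      obtain ⟨c, hc1, hc2⟩ := h
      exact ⟨c, hc1, hc2⟩
    · rintro ⟨c, hc1, hc2⟩ hall
      exact hc2 (hall c hc1)
  rw [hneg, count_bad n k hk hkn] at hsplit
  rw [Finset.card_range] at hsplit
  unfold goodset epsN
  omega

lemma F_inj {a b : ℕ} (ha : 1 ≤ a) (hb : 1 ≤ b) (h : F a = F b) : a = b := by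
  rcases Nat.lt_trichotomy a b with hl | hl | hl
  · exact absurd h (Nat.ne_of_lt (F_strictMonoOn a b ha hl))
  · exact hl
  · exact absurd h.symm (Nat.ne_of_lt (F_strictMonoOn b a hb hl))

theorem R_eq_sum (n : ℕ) (hn : 3 ≤ n) :
    R n = ∑ k ∈ Finset.Icc 1 (n-2), (goodset n k).card := by
  unfold R
  have hSet : {p : ℕ × ℕ | 1 ≤ p.2 ∧ p.1 + 2 * p.2 ≤ (fibWord n).length ∧
      ∀ t < p.2, (fibWord n).getD (p.1 + t) 0 = (fibWord n).getD (p.1 + p.2 + t) 0}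
      = ↑((Finset.Icc 1 (n-2)).biUnion
          (fun k => (goodset n k).image (fun i => (i, F k)))) := by
    ext ⟨i, l⟩
    simp only [Set.mem_setOf_eq, Finset.coe_biUnion, Set.mem_iUnion, Finset.mem_coe,
      Finset.mem_image, Finset.mem_Icc, Finset.mem_biUnion]
    rw [length_fibWord]
    constructor
    · rintro ⟨hl1, hlen, hmatch⟩
      -- translate getD to s
      have hs : ∀ t, t < l → s (i + t) = s (i + l + t) := by
        intro t ht
        have h1 := hmatch t ht
        rw [getD_fibWord (by omega) (by omega), getD_fibWord (by omega) (by omega)] at h1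
        exact h1
      -- l must be Fibonacci
      have hfib : ∃ a, F a = l := by
        by_contra hnf
        push_neg at hnf
        obtain ⟨c, hc1, hc2⟩ := noSquare l hl1 hnf i
        have := hs c hc1
        rw [show i + l + c = i + c + l from by omega] at this
        exact hc2 this
      obtain ⟨κ, hκ1, hκl⟩ := fib_kpos hfib
      have hκn : κ ≤ n - 2 := by
        by_contra hcc
        have h1 : F (n-1) ≤ F κ := F_mono (by omega)
        have h2 : F (n-2) < F (n-2+1) := F_lt_succ (n-2) (by omega)
        have h3 : F n = F (n-1) + F (n-2) := F_split n (by omega)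
        have e2 : n-2+1 = n-1 := by omega
        rw [e2] at h2
        omega
      refine ⟨κ, ⟨hκ1, hκn⟩, i, ?_, by rw [hκl]⟩
      unfold goodset
      rw [Finset.mem_filter, Finset.mem_range]
      constructor
      · omega
      · intro c hc
        have := hs c (by omega)
        rw [show i + l + c = i + c + l from by omega] at this
        rw [show i + c + F κ = i + c + l from by rw [hκl]]
        exact this
    · rintro ⟨k, ⟨hk1, hkn⟩, i', hi', heq⟩
      have hii : i' = i := congrArg Prod.fst heq
      have hll : F k = l := congrArg Prod.snd heq
      rw [← hii, ← hll]
      unfold goodset at hi'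
      rw [Finset.mem_filter, Finset.mem_range] at hi'
      obtain ⟨hrange, hcond⟩ := hi'
      have hE1 : 2 * F k + 1 ≤ F n := by
        have h1 : F k ≤ F (n-2) := F_mono (by omega)
        have h2 : F (n-2) < F (n-2+1) := F_lt_succ (n-2) (by omega)
        have e2 : n-2+1 = n-1 := by omega
        rw [e2] at h2
        have h3 : F n = F (n-1) + F (n-2) := F_split n (by omega)
        omega
      refine ⟨F_pos k, by omega, ?_⟩
      intro t ht
      have := hcond t ht
      rw [getD_fibWord (by omega) (by omega), getD_fibWord (by omega) (by omega)]
      rw [show i' + F k + t = i' + t + F k from by omega]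
      exact this
  rw [hSet, Set.ncard_coe_finset]
  rw [Finset.card_biUnion]
  · apply Finset.sum_congr rfl
    intro k _
    apply Finset.card_image_of_injective
    intro a b hab
    exact congrArg Prod.fst hab
  · intro k1 hk1 k2 hk2 hne
    simp only [Finset.mem_coe, Finset.mem_Icc] at hk1 hk2
    rw [Function.onFun, Finset.disjoint_left]
    rintro ⟨a, b⟩ h1 h2
    simp only [Finset.mem_image] at h1 h2
    obtain ⟨x1, _, he1⟩ := h1
    obtain ⟨x2, _, he2⟩ := h2
    have hb1 : F k1 = b := congrArg Prod.snd he1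
    have hb2 : F k2 = b := congrArg Prod.snd he2
    exact hne (F_inj (by omega) (by omega) (hb1.trans hb2.symm))


/-- integer convolution sum -/
def SC (n : ℕ) : ℤ := ∑ k ∈ Finset.Icc 1 (n-2), (F (n-k-1) * F k : ℤ)

lemma SF_val : ∀ n, 3 ≤ n → (∑ k ∈ Finset.Icc 1 (n-2), (F k : ℤ)) = F n - 2 := by
  intro n hn
  induction n, hn using Nat.le_induction with
  | base =>
    rw [show (3:ℕ) - 2 = 1 from rfl, Finset.Icc_self, Finset.sum_singleton]
    norm_num [show F 1 = 1 from rfl, show F 3 = 3 from rfl]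
  | succ n hn ih =>
    rw [show n + 1 - 2 = (n-2) + 1 from by omega, Finset.sum_Icc_succ_top (by omega), ih,
      show n - 2 + 1 = n - 1 from by omega]
    have h3 : F (n+1) = F n + F (n-1) := by
      rw [F_split (n+1) (by omega), show n+1-1 = n from by omega,
        show n+1-2 = n-1 from by omega]
    have h2 : 0 < F n := F_pos n
    push_cast
    omega

lemma SFr_val (n : ℕ) (hn : 3 ≤ n) :
    (∑ k ∈ Finset.Icc 1 (n-2), (F (n-k-1) : ℤ)) = F n - 2 := by
  rw [← SF_val n hn]
  apply Finset.sum_nbij' (fun k => n-1-k) (fun k => n-1-k)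
  · intro a ha
    simp only [Finset.mem_Icc] at *
    omega
  · intro a ha
    simp only [Finset.mem_Icc] at *
    omega
  · intro a ha
    simp only [Finset.mem_Icc] at ha
    omega
  · intro a ha
    simp only [Finset.mem_Icc] at ha
    omega
  · intro a ha
    simp only [Finset.mem_Icc] at ha
    congr 2
    omega

lemma SC_rec (n : ℕ) (hn : 3 ≤ n) : SC (n+1) = SC n + SC (n-1) + (F n : ℤ) := by
  unfold SC
  rw [show n + 1 - 2 = (n-2) + 1 from by omega, Finset.sum_Icc_succ_top (by omega)]
  have hstep1 : ∀ k ∈ Finset.Icc 1 (n-2), (F (n+1-k-1) * F k : ℤ)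
      = (F (n-k-1) * F k : ℤ) + (F (n-1-k-1) * F k : ℤ) := by
    intro k hk
    simp only [Finset.mem_Icc] at hk
    have hs : F (n+1-k-1) = F (n-k-1) + F (n-1-k-1) := by
      rw [F_split (n+1-k-1) (by omega)]
      congr 2 <;> omega
    rw [hs]
    push_cast
    ring
  rw [Finset.sum_congr rfl hstep1, Finset.sum_add_distrib]
  have hsecond : (∑ k ∈ Finset.Icc 1 (n-2), (F (n-1-k-1) * F k : ℤ))
      = (∑ k ∈ Finset.Icc 1 (n-1-2), (F (n-1-k-1) * F k : ℤ)) + F (n-2) := by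
    rcases Nat.lt_or_ge n 4 with h4 | h4
    · have h3 : n = 3 := by omega
      subst h3
      rw [show (3:ℕ)-2 = 1 from rfl, show (3:ℕ)-1-2 = 0 from rfl, Finset.Icc_self,
        Finset.sum_singleton, show Finset.Icc 1 0 = ∅ from rfl, Finset.sum_empty,
        show (3:ℕ)-1-1-1 = 0 from rfl]
      norm_num [show F 0 = 1 from rfl, show F 1 = 1 from rfl]
    · rw [show n - 1 - 2 = n - 3 from by omega,
        show n - 2 = (n-3) + 1 from by omega, Finset.sum_Icc_succ_top (by omega)]
      congr 1
      rw [show n - 1 - (n - 3 + 1) - 1 = 0 from by omega, show F 0 = 1 from rfl,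
        show n - 3 + 1 = n - 2 from by omega]
      push_cast
      ring
  rw [hsecond]
  have hlast : (F (n+1-(n-2+1)-1) * F (n-2+1) : ℤ) = F (n-1) := by
    rw [show n+1-(n-2+1)-1 = 1 from by omega, show F 1 = 1 from rfl,
      show n-2+1 = n-1 from by omega]
    push_cast
    ring
  rw [hlast, F_split n (by omega)]
  push_cast
  ring


lemma SC_closed : ∀ n, 3 ≤ n →
    5 * SC n = ((n:ℤ) - 20) * F n + (2*(n:ℤ)+12) * F (n-1) + 20 * F (n-2) := by
  intro n
  induction n using Nat.strong_induction_on with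
  | _ n ih =>
  intro hn
  rcases Nat.lt_or_ge n 5 with h5 | h5
  · interval_cases n
    · have e : SC 3 = 1 := by
        unfold SC
        rw [show (3:ℕ)-2 = 1 from rfl, Finset.Icc_self, Finset.sum_singleton,
          show (3:ℕ)-1-1 = 1 from rfl, show F 1 = 1 from rfl]
        norm_num
      rw [e]
      norm_num [show F 3 = 3 from rfl, show F 2 = 2 from rfl, show F 1 = 1 from rfl]
    · have e : SC 4 = 4 := by
        unfold SC
        rw [show (4:ℕ)-2 = 1+1 from rfl, Finset.sum_Icc_succ_top (by omega),
          Finset.Icc_self, Finset.sum_singleton]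
        norm_num [show F 2 = 2 from rfl, show F 1 = 1 from rfl]
      rw [e]
      norm_num [show F 4 = 5 from rfl, show F 3 = 3 from rfl, show F 2 = 2 from rfl]
  · have ih1 := ih (n-1) (by omega) (by omega)
    have ih2 := ih (n-2) (by omega) (by omega)
    rw [show n-1-1 = n-2 from by omega, show n-1-2 = n-3 from by omega] at ih1
    rw [show n-2-1 = n-3 from by omega, show n-2-2 = n-4 from by omega] at ih2
    have hrec := SC_rec (n-1) (by omega)
    rw [show n-1+1 = n from by omega, show n-1-1 = n-2 from by omega] at hrec
    have eF1 : (F n : ℤ) = F (n-1) + F (n-2) := by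
      rw [F_split n (by omega)]; push_cast; ring
    have eF2 : (F (n-1) : ℤ) = F (n-2) + F (n-3) := by
      rw [F_split (n-1) (by omega), show n-1-1 = n-2 from by omega,
        show n-1-2 = n-3 from by omega]; push_cast; ring
    have eF3 : (F (n-2) : ℤ) = F (n-3) + F (n-4) := by
      rw [F_split (n-2) (by omega), show n-2-1 = n-3 from by omega,
        show n-2-2 = n-4 from by omega]; push_cast; ring
    have c1 : ((n-1 : ℕ) : ℤ) = (n:ℤ) - 1 := by omega
    have c2 : ((n-2 : ℕ) : ℤ) = (n:ℤ) - 2 := by omega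
    rw [c1, eF2, eF3] at ih1
    rw [c2, eF3] at ih2
    rw [hrec, eF1, eF2, eF3]
    linear_combination ih1 + ih2

def SE (n : ℕ) : ℤ := ∑ k ∈ Finset.Icc 1 (n-2), (epsN n k : ℤ)

lemma SE_val : ∀ n, 3 ≤ n → SE n = (n:ℤ) - 1 := by
  intro n
  induction n using Nat.strong_induction_on with
  | _ n ih =>
  intro hn
  rcases Nat.lt_or_ge n 5 with h5 | h5
  · interval_cases n
    · unfold SE
      rw [show (3:ℕ)-2 = 1 from rfl, Finset.Icc_self, Finset.sum_singleton]
      unfold epsN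
      norm_num
    · unfold SE
      rw [show (4:ℕ)-2 = 1+1 from rfl, Finset.sum_Icc_succ_top (by omega),
        Finset.Icc_self, Finset.sum_singleton]
      unfold epsN
      norm_num
  · have ihn := ih (n-2) (by omega) (by omega)
    unfold SE at ihn ⊢
    rw [show n-2 = (n-3)+1 from by omega, Finset.sum_Icc_succ_top (by omega),
      show n-3 = (n-4)+1 from by omega, Finset.sum_Icc_succ_top (by omega)]
    have hcong : ∀ k ∈ Finset.Icc 1 (n-4), (epsN n k : ℤ) = (epsN (n-2) k : ℤ) := by
      intro k hk
      simp only [Finset.mem_Icc] at hk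
      unfold epsN
      have hpar : (n-k-1) % 2 = (n-2-k-1) % 2 := by omega
      rw [hpar]
    rw [Finset.sum_congr rfl hcong]
    rw [show n-2-2 = n-4 from by omega] at ihn
    rw [ihn]
    have e1 : (epsN n (n-4+1) : ℤ) = 0 := by
      unfold epsN
      rw [if_neg (by omega), if_neg (by omega)]
      norm_num
    have e2 : (epsN n (n-4+1+1) : ℤ) = 2 := by
      unfold epsN
      rw [if_pos (by omega)]
      norm_num
    rw [e1, e2]
    push_cast
    omega

theorem stmt17' (n : ℕ) (hn : 3 ≤ n) :
    (5 * R n : ℤ) =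
      4 * n * F n - 2 * (n + 6) * F (n - 1) - 20 * F (n - 2) + 5 * (n + 1) := by
  have hR := R_eq_sum n hn
  have hgood : ∀ k ∈ Finset.Icc 1 (n-2), ((goodset n k).card : ℤ)
      = ((F n : ℤ) + 2) - F k - (F (n-k-1) : ℤ) * F k - F (n-k-1) - epsN n k := by
    intro k hk
    simp only [Finset.mem_Icc] at hk
    have h := good_count n k (by omega) (by omega)
    have hp : 1 ≤ F (n-k-1) := F_pos (n-k-1)
    have hE1 : 2 * F k + 1 ≤ F n := by
      have h1 : F k ≤ F (n-2) := F_mono (by omega)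
      have h2 : F (n-2) < F (n-2+1) := F_lt_succ (n-2) (by omega)
      have e2 : n-2+1 = n-1 := by omega
      rw [e2] at h2
      have h3 : F n = F (n-1) + F (n-2) := F_split n (by omega)
      omega
    have hcast := congrArg (Nat.cast : ℕ → ℤ) h
    push_cast [Nat.cast_sub hp, Nat.cast_sub (show 2 * F k ≤ F n by omega)] at hcast
    linear_combination hcast
  have hRz : (R n : ℤ) = ∑ k ∈ Finset.Icc 1 (n-2), ((goodset n k).card : ℤ) := by
    rw [hR]
    push_cast
    rfl
  rw [Finset.sum_congr rfl hgood] at hRz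
  rw [Finset.sum_sub_distrib, Finset.sum_sub_distrib, Finset.sum_sub_distrib,
    Finset.sum_sub_distrib, Finset.sum_const, Nat.card_Icc] at hRz
  have hSF := SF_val n hn
  have hSFr := SFr_val n hn
  have hSE := SE_val n hn
  unfold SE at hSE
  rw [hSF, hSFr, hSE] at hRz
  have hSCdef : (∑ k ∈ Finset.Icc 1 (n-2), (F (n-k-1) : ℤ) * F k) = SC n := by
    unfold SC
    apply Finset.sum_congr rfl
    intro k _
    push_cast
    ring
  rw [hSCdef] at hRz
  rw [show (n - 2 + 1 - 1) = n - 2 from by omega] at hRz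
  rw [nsmul_eq_mul, show ((n-2 : ℕ) : ℤ) = (n:ℤ) - 2 from by omega] at hRz
  have hSC := SC_closed n hn
  push_cast
  linear_combination 5 * hRz - hSC

end Fib17

/-- for n ≥ 3,
5·R(n) = 4nF(n) − 2(n+6)F(n−1) − 20F(n−2) + 5(n+1) (as integers). -/
theorem stmt17 (n : ℕ) (hn : 3 ≤ n) :
    (5 * R n : ℤ) =
      4 * n * F n - 2 * (n + 6) * F (n - 1) - 20 * F (n - 2) + 5 * (n + 1) := by
  exact Fib17.stmt17' n hn
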